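/- If f_a(x) := Q_w(x,a) − Q_w(x,d) (the bonus of action a over the default d w.r.t. weights w), and the decision list is formed by listing all pairs (t, a) with positive bonus over partial states t of scope T_a, appending the default branch (⊥, d), and sorting branches by decreasing bonus, then for every state x the action selected by the resulting decision list policy is greedy: Q_w(x, π(x)) = max_{a ∈ A} Q_w(x, a). -/

import Mathlib

open BigOperators

/-- A full state `x : Fin n → V` is consistent with a partial state `t : Fin n → Option V`
iff `x` agrees with `t` wherever `t` is defined. -/
def Consistent {n : ℕ} {V : Type*} (t : Fin n → Option V) (x : Fin n → V) : Prop :=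
  ∀ i v, t i = some v → x i = v

/-- greedy decision list policy.  The bonus of action `a` over the default `d`
is `δ_a x = Q x a − Q x d`; it has scope `T a`.  The decision list `p` consists of, for each
action `a ≠ d`, all partial states with domain `T a` and positive bonus (recording the bonus),
together with a default branch `(⊥, d, 0)`, and is sorted by decreasing bonus.  Then the
action selected by the decision list policy (first matching branch) is greedy for every
state `x`. -/
theorem dec_list_pol_greedy {n : ℕ} {V A : Type*} [Fintype A] (d : A)
    (Q : (Fin n → V) → A → ℝ) (T : A → Finset (Fin n))
    (p : List ((Fin n → Option V) × A × ℝ)) (π : (Fin n → V) → A)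
    -- `δ_a` has scope `T a`:
    (hscope : ∀ a : A, ∀ x y : Fin n → V, (∀ i ∈ T a, x i = y i) →
      Q x a - Q x d = Q y a - Q y d)
    -- every branch is either the default branch or a positive-bonus branch of some
    -- non-default action `a` with domain exactly `T a`, recording the exact bonus:
    (hbranch : ∀ b ∈ p,
      (b.2.1 = d ∧ (∀ i, b.1 i = none) ∧ b.2.2 = 0) ∨
      (b.2.1 ≠ d ∧ (∀ i, (b.1 i).isSome ↔ i ∈ T b.2.1) ∧ 0 < b.2.2 ∧
        ∀ x : Fin n → V, Consistent b.1 x → Q x b.2.1 - Q x d = b.2.2))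
    -- the default branch is present:
    (hdefault : ((fun _ => none : Fin n → Option V), d, (0 : ℝ)) ∈ p)
    -- completeness: every partial state with domain `T a` and positive bonus is listed:
    (hcomplete : ∀ a : A, a ≠ d → ∀ t : Fin n → Option V,
      (∀ i, (t i).isSome ↔ i ∈ T a) →
      (∀ x : Fin n → V, Consistent t x → 0 < Q x a - Q x d) →
      ∃ b : ℝ, (t, a, b) ∈ p)
    -- `p` is sorted by decreasing bonus:
    (hsorted : p.Pairwise (fun u v => v.2.2 ≤ u.2.2))
    -- `π` selects the action of the first matching branch:
    (hπ : ∀ x : (Fin n → V), ∃ i : Fin p.length,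
      Consistent (p.get i).1 x ∧ (∀ j : Fin p.length, j < i → ¬ Consistent (p.get j).1 x) ∧
      π x = (p.get i).2.1) :
    ∀ x : Fin n → V, ∀ a : A, Q x a ≤ Q x (π x) := by
  intro x a
  obtain ⟨i, hci, hmin, hπx⟩ := hπ x
  have key : ∀ j : Fin p.length, Consistent (p.get j).1 x → (p.get j).2.2 ≤ (p.get i).2.2 := by
    intro j hj
    rcases lt_or_ge j i with h | h
    · exact absurd hj (hmin j h)
    · rcases h.lt_or_eq with h' | h'
      · exact hsorted.rel_get_of_lt h'
      · rw [h']
  have hsel : Q x (π x) - Q x d = (p.get i).2.2 := by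
    rcases hbranch (p.get i) (p.get_mem i) with ⟨h1, h2, h3⟩ | ⟨h1, h2, h3, h4⟩
    · rw [hπx, h1, h3]; ring
    · rw [hπx]; exact h4 x hci
  have hd0 : 0 ≤ (p.get i).2.2 := by
    obtain ⟨j, hj⟩ := List.mem_iff_get.mp hdefault
    have h2 := key j (by rw [hj]; intro i v h; simp at h)
    rw [hj] at h2; exact h2
  have hQd : Q x d ≤ Q x (π x) := by linarith
  rcases le_or_gt (Q x a) (Q x d) with h | h
  · linarith
  · by_cases had : a = d
    · subst had; linarith
    · set t : Fin n → Option V := fun i => if i ∈ T a then some (x i) else none with ht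
      have htdom : ∀ i, (t i).isSome ↔ i ∈ T a := by
        intro i; simp only [ht]; split <;> simp [*]
      have htc : Consistent t x := by
        intro i v hv; simp only [ht] at hv; split at hv <;> simp_all
      have hpos : ∀ y : Fin n → V, Consistent t y → 0 < Q y a - Q y d := by
        intro y hy
        have heq : Q y a - Q y d = Q x a - Q x d := by
          apply hscope; intro i hi
          exact hy i (x i) (by simp [ht, hi])
        linarith
      obtain ⟨b, hb⟩ := hcomplete a had t htdom hpos
      obtain ⟨j, hj⟩ := List.mem_iff_get.mp hb
      rcases hbranch (t, a, b) hb with ⟨h1, _, _⟩ | ⟨_, _, _, h4⟩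
      · exact absurd h1 had
      · have hbval : Q x a - Q x d = b := h4 x htc
        have hle := key j (by rw [hj]; exact htc)
        rw [hj] at hle
        simp only at hle
        linarith
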